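/- Let I be an arc-consistent binary CSP instance with at least 2 variables satisfying the ∀∃ broken-triangle property (∀∃BTP, i.e., the ∀∃ broken k-dimensional polyhedron property with k = 2) on variable x_m. Then every solution of the sub-instance I_{-m} on X \ {x_m} extends to a solution of I. -/

import Mathlib

universe u v

/-- A binary CSP instance: finite domains and binary relations with
`rel j i` the transpose of `rel i j`. -/
structure BinCSP (V : Type u) (α : Type v) where
  dom : V → Set α
  rel : V → V → α → α → Prop
  finDom : ∀ i, (dom i).Finite
  symm : ∀ i j a b, rel i j a b ↔ rel j i b a

namespace BinCSP

variable {V : Type u} {α : Type v}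

/-- A solution assigns to each variable a domain value so that all binary
relations are satisfied. -/
def IsSol (I : BinCSP V α) (s : V → α) : Prop :=
  (∀ i, s i ∈ I.dom i) ∧ ∀ i j, i ≠ j → I.rel i j (s i) (s j)

/-- The instance obtained by eliminating variable `i`: each other domain is
restricted to values supported at `i`, then `i` and its constraints are removed. -/
def elim (I : BinCSP V α) (i : V) : BinCSP {j : V // j ≠ i} α where
  dom j := {v | v ∈ I.dom j.1 ∧ ∃ w ∈ I.dom i, I.rel j.1 i v w}
  rel j k a b := I.rel j.1 k.1 a b
  finDom j := (I.finDom j.1).subset fun _ hv => hv.1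
  symm j k a b := I.symm j.1 k.1 a b

/-- The sub-instance on `X \ {i}` (same domains, constraints restricted). -/
def sub (I : BinCSP V α) (i : V) : BinCSP {j : V // j ≠ i} α where
  dom j := I.dom j.1
  rel j k a b := I.rel j.1 k.1 a b
  finDom j := I.finDom j.1
  symm j k a b := I.symm j.1 k.1 a b

/-- A broken triangle on variable `m` with base `⟨vi, vj⟩` (to the distinct
variables `i, j ≠ m`) and apexes `u` (compatible with `vi`) and `u'`
(compatible with `vj`). -/
def BrokenTri (I : BinCSP V α) (m i j : V) (vi vj u u' : α) : Prop :=
  i ≠ m ∧ j ≠ m ∧ i ≠ j ∧ vi ∈ I.dom i ∧ vj ∈ I.dom j ∧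
    u ∈ I.dom m ∧ u' ∈ I.dom m ∧
    I.rel i j vi vj ∧ I.rel i m vi u ∧ I.rel j m vj u' ∧
    ¬ I.rel i m vi u' ∧ ¬ I.rel j m vj u

/-- Arc consistency: every value of every variable has a support at every
other variable. -/
def ArcConsistent (I : BinCSP V α) : Prop :=
  ∀ i j, i ≠ j → ∀ v ∈ I.dom i, ∃ w ∈ I.dom j, I.rel i j v w

/-- The ∀∃ broken-triangle property (∀∃BTP) on variable `m`: every value `vi`
of every other variable has a support `vm` at `m` such that no broken triangle
on `m` has base containing `vi` and `vm` as one of its apexes. -/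
def AEBTP (I : BinCSP V α) (m : V) : Prop :=
  ∀ i, i ≠ m → ∀ vi ∈ I.dom i, ∃ vm ∈ I.dom m, I.rel i m vi vm ∧
    ∀ j, j ≠ i → j ≠ m → ∀ vj ∈ I.dom j, ∀ u u' : α,
      ¬ (BrokenTri I m i j vi vj u u' ∧ (vm = u ∨ vm = u'))

/-- in an arc-consistent instance with at least 2 variables
satisfying ∀∃BTP on `x_m`, every solution of the sub-instance on `X \ {x_m}`
extends to a solution of `I`. -/
theorem AEBTP_extend [Fintype V] (I : BinCSP V α) (m : V)
    (hcard : 2 ≤ Fintype.card V) (hac : ArcConsistent I) (h : AEBTP I m)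
    (s' : {j : V // j ≠ m} → α) (hs' : (I.sub m).IsSol s') :
    ∃ s : V → α, I.IsSol s ∧ ∀ j (hj : j ≠ m), s j = s' ⟨j, hj⟩ := by
  classical
  obtain ⟨i0, hi0⟩ : ∃ i : V, i ≠ m := by
    have : 1 < Fintype.card V := hcard
    exact Fintype.exists_ne_of_one_lt_card this m
  set S : α → Finset V := fun u =>
    Finset.univ.filter (fun j => ∃ hj : j ≠ m, I.rel j m (s' ⟨j, hj⟩) u) with hS
  have hmemS : ∀ u j, j ∈ S u ↔ ∃ hj : j ≠ m, I.rel j m (s' ⟨j, hj⟩) u := by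
    intro u j; simp [hS]
  -- the candidate set of apexes is nonempty
  obtain ⟨u0, hu0dom, hu0rel⟩ := hac i0 m hi0 (s' ⟨i0, hi0⟩) (hs'.1 ⟨i0, hi0⟩)
  have hDne : ((I.finDom m).toFinset).Nonempty :=
    ⟨u0, (Set.Finite.mem_toFinset _).2 hu0dom⟩
  obtain ⟨u, huD, hmax⟩ := Finset.exists_max_image ((I.finDom m).toFinset)
    (fun u => (S u).card) hDne
  have hu : u ∈ I.dom m := (Set.Finite.mem_toFinset _).1 huD
  -- claim: u is compatible with every s' j
  have hall : ∀ j (hj : j ≠ m), I.rel j m (s' ⟨j, hj⟩) u := by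
    by_contra hcon
    push_neg at hcon
    obtain ⟨i, hi, hni⟩ := hcon
    obtain ⟨vm, hvmdom, hvmrel, hnb⟩ := h i hi (s' ⟨i, hi⟩) (hs'.1 ⟨i, hi⟩)
    have hsub : S u ⊆ S vm := by
      intro j hj
      obtain ⟨hjm, hjrel⟩ := (hmemS u j).1 hj
      refine (hmemS vm j).2 ⟨hjm, ?_⟩
      by_contra hjn
      have hji : j ≠ i := by
        rintro rfl; exact hni hjrel
      refine hnb j hji hjm (s' ⟨j, hjm⟩) (hs'.1 ⟨j, hjm⟩) vm u
        ⟨⟨hi, hjm, hji.symm, hs'.1 ⟨i, hi⟩, hs'.1 ⟨j, hjm⟩, hvmdom, hu,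
          hs'.2 ⟨i, hi⟩ ⟨j, hjm⟩ (by simp [Subtype.ext_iff, hji.symm]),
          hvmrel, hjrel, hni, hjn⟩, Or.inl rfl⟩
    have hiin : i ∈ S vm := (hmemS vm i).2 ⟨hi, hvmrel⟩
    have hiout : i ∉ S u := by
      intro hmem
      obtain ⟨_, hr⟩ := (hmemS u i).1 hmem
      exact hni hr
    have hlt : (S u).card < (S vm).card :=
      Finset.card_lt_card ⟨hsub, fun hba => hiout (hba hiin)⟩
    exact absurd (hmax vm ((Set.Finite.mem_toFinset _).2 hvmdom)) (not_le.2 hlt)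
  -- define the extension
  refine ⟨fun j => if hj : j = m then u else s' ⟨j, hj⟩, ⟨?_, ?_⟩, ?_⟩
  · intro j
    by_cases hj : j = m
    · subst hj; simpa using hu
    · simp only [dif_neg hj]; exact hs'.1 ⟨j, hj⟩
  · intro i j hij
    by_cases hi : i = m
    · subst hi
      have hj : j ≠ i := fun hj => hij hj.symm
      simp only [dif_pos rfl, dif_neg hj]
      exact (I.symm j i _ _).1 (hall j hj)
    · by_cases hj : j = m
      · subst hj
        simp only [dif_pos rfl, dif_neg hi]
        exact hall i hi
      · simp only [dif_neg hi, dif_neg hj]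
        exact hs'.2 ⟨i, hi⟩ ⟨j, hj⟩ (by simp [Subtype.ext_iff, hij])
  · intro j hj; simp [hj]

end BinCSP
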